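/- Let A : [0,1]² → ℝ be α-Hölder continuous with Hölder constant Hol_α(A), m = max_{ν∈M}∫Adν, and define the Mañé potential S(x,y) = inf_k inf over k-paths (x₁,…,x_k) with x₁=x, x_k=y of −Σ_{i=1}^{k−1}(A−m)(x_i,x_{i+1}). Then for every fixed x, the function y ↦ S(x,y) is α-Hölder with constant Hol_α(A), uniformly in x. -/

import Mathlib

open MeasureTheory unitInterval

/-- sums over k-paths from x to y, inside [0,1], of -Σ (A - m) -/
def pathSet (A : ℝ → ℝ → ℝ) (m x y : ℝ) : Set ℝ :=
  {s | ∃ k : ℕ, 2 ≤ k ∧ ∃ p : ℕ → ℝ, p 0 = x ∧ p (k - 1) = y ∧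
    (∀ i < k, p i ∈ Set.Icc (0:ℝ) 1) ∧
    s = -∑ i ∈ Finset.range (k - 1), (A (p i) (p (i + 1)) - m)}

/-- the Mañé potential S(x,y) -/
noncomputable def manePot (A : ℝ → ℝ → ℝ) (m x y : ℝ) : ℝ := sInf (pathSet A m x y)

lemma pathSet_nonempty (A : ℝ → ℝ → ℝ) (m x y : ℝ)
    (hx : x ∈ Set.Icc (0:ℝ) 1) (hy : y ∈ Set.Icc (0:ℝ) 1) :
    (pathSet A m x y).Nonempty := by
  refine ⟨-(A x y - m), 2, le_refl 2, fun i => if i = 0 then x else y, by simp, by simp, ?_, ?_⟩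
  · intro i hi
    by_cases h : i = 0 <;> simp [h, hx, hy]
  · simp

lemma key_lemma (A : ℝ → ℝ → ℝ) (α C m : ℝ) (hC : 0 ≤ C)
    (hHol : ∀ x ∈ Set.Icc (0:ℝ) 1, ∀ y ∈ Set.Icc (0:ℝ) 1, ∀ x' ∈ Set.Icc (0:ℝ) 1,
      ∀ y' ∈ Set.Icc (0:ℝ) 1,
      |A x y - A x' y'| ≤ C * (max |x - x'| |y - y'|) ^ α)
    (x y z : ℝ) (hx : x ∈ Set.Icc (0:ℝ) 1) (hy : y ∈ Set.Icc (0:ℝ) 1)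
    (hz : z ∈ Set.Icc (0:ℝ) 1) :
    ∀ s ∈ pathSet A m x y, ∃ s' ∈ pathSet A m x z, s' ≤ s + C * |y - z| ^ α := by
  rintro s ⟨k, hk, p, hp0, hpk, hpI, hs⟩
  obtain ⟨n, rfl⟩ : ∃ n, k = n + 2 := ⟨k - 2, by omega⟩
  set q : ℕ → ℝ := fun i => if i = n + 1 then z else p i with hq
  have hq0 : q 0 = x := by simp [hq, hp0]
  have hqn : q (n + 1) = z := by simp [hq]
  have hpn1 : p (n + 1) = y := by simpa using hpk
  refine ⟨-∑ i ∈ Finset.range (n + 1), (A (q i) (q (i + 1)) - m), ⟨n + 2, by omega, q,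
    hq0, by simpa using hqn, ?_, by simp⟩, ?_⟩
  · intro i hi
    by_cases h : i = n + 1
    · simpa [hq, h] using hz
    · simpa [hq, h] using hpI i hi
  · have hsum : ∀ i ∈ Finset.range n, A (q i) (q (i + 1)) - m = A (p i) (p (i + 1)) - m := by
      intro i hi
      simp only [Finset.mem_range] at hi
      have h1 : i ≠ n + 1 := by omega
      have h2 : i + 1 ≠ n + 1 := by omega
      have h3 : i ≠ n := by omega
      simp [hq, h1, h2, h3]
    have e1 : ∑ i ∈ Finset.range (n + 1), (A (q i) (q (i + 1)) - m)
        = ∑ i ∈ Finset.range n, (A (p i) (p (i + 1)) - m) + (A (p n) z - m) := by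
      rw [Finset.sum_range_succ, Finset.sum_congr rfl hsum]
      have h1 : n ≠ n + 1 := by omega
      simp [hq, h1]
    have e2 : s = -(∑ i ∈ Finset.range n, (A (p i) (p (i + 1)) - m) + (A (p n) y - m)) := by
      rw [hs]
      congr 1
      rw [show n + 2 - 1 = n + 1 from rfl, Finset.sum_range_succ, hpn1]
    have hbound : |A (p n) y - A (p n) z| ≤ C * |y - z| ^ α := by
      have hpnI : p n ∈ Set.Icc (0:ℝ) 1 := hpI n (by omega)
      have := hHol (p n) hpnI y hy (p n) hpnI z hz
      simpa [abs_nonneg] using this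
    rw [e1, e2]
    have := (abs_le.mp hbound).2
    linarith

lemma bdd_transfer (A : ℝ → ℝ → ℝ) (α C m : ℝ) (hC : 0 ≤ C)
    (hHol : ∀ x ∈ Set.Icc (0:ℝ) 1, ∀ y ∈ Set.Icc (0:ℝ) 1, ∀ x' ∈ Set.Icc (0:ℝ) 1,
      ∀ y' ∈ Set.Icc (0:ℝ) 1,
      |A x y - A x' y'| ≤ C * (max |x - x'| |y - y'|) ^ α)
    (x y z : ℝ) (hx : x ∈ Set.Icc (0:ℝ) 1) (hy : y ∈ Set.Icc (0:ℝ) 1)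
    (hz : z ∈ Set.Icc (0:ℝ) 1) (hb : BddBelow (pathSet A m x y)) :
    BddBelow (pathSet A m x z) := by
  obtain ⟨b, hbb⟩ := hb
  refine ⟨b - C * |z - y| ^ α, fun s hs => ?_⟩
  obtain ⟨s', hs', hle⟩ := key_lemma A α C m hC hHol x z y hx hz hy s hs
  have := hbb hs'
  linarith

theorem stmt17 (A : ℝ → ℝ → ℝ) (α C : ℝ) (hα : 0 < α ∧ α ≤ 1) (hC : 0 ≤ C)
    (hHol : ∀ x ∈ Set.Icc (0:ℝ) 1, ∀ y ∈ Set.Icc (0:ℝ) 1, ∀ x' ∈ Set.Icc (0:ℝ) 1,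
      ∀ y' ∈ Set.Icc (0:ℝ) 1,
      |A x y - A x' y'| ≤ C * (max |x - x'| |y - y'|) ^ α)
    (m : ℝ)
    (hm : IsGreatest {r : ℝ | ∃ ν : ProbabilityMeasure (I × I),
        (∀ f : C(I, ℝ), ∫ p, (f p.1 - f p.2) ∂(ν : Measure (I × I)) = 0) ∧
        r = ∫ p, A p.1 p.2 ∂(ν : Measure (I × I))} m) :
    ∀ x ∈ Set.Icc (0:ℝ) 1, ∀ y ∈ Set.Icc (0:ℝ) 1, ∀ z ∈ Set.Icc (0:ℝ) 1,
      |manePot A m x y - manePot A m x z| ≤ C * |y - z| ^ α := by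
  intro x hx y hy z hz
  have hε : 0 ≤ C * |y - z| ^ α :=
    mul_nonneg hC (Real.rpow_nonneg (abs_nonneg _) α)
  have hεzy : C * |z - y| ^ α = C * |y - z| ^ α := by rw [abs_sub_comm]
  by_cases hb : BddBelow (pathSet A m x y)
  · have hbz : BddBelow (pathSet A m x z) := bdd_transfer A α C m hC hHol x y z hx hy hz hb
    have hney : (pathSet A m x y).Nonempty := pathSet_nonempty A m x y hx hy
    have hnez : (pathSet A m x z).Nonempty := pathSet_nonempty A m x z hx hz
    have h1 : manePot A m x z ≤ manePot A m x y + C * |y - z| ^ α := by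
      have : manePot A m x z - C * |y - z| ^ α ≤ sInf (pathSet A m x y) := by
        apply le_csInf hney
        intro s hs
        obtain ⟨s', hs', hle⟩ := key_lemma A α C m hC hHol x y z hx hy hz s hs
        have := csInf_le hbz hs'
        unfold manePot
        linarith
      unfold manePot at *
      linarith
    have h2 : manePot A m x y ≤ manePot A m x z + C * |y - z| ^ α := by
      have : manePot A m x y - C * |y - z| ^ α ≤ sInf (pathSet A m x z) := by
        apply le_csInf hnez
        intro s hs
        obtain ⟨s', hs', hle⟩ := key_lemma A α C m hC hHol x z y hx hz hy s hs
        have := csInf_le hb hs'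
        unfold manePot
        rw [hεzy] at hle
        linarith
      unfold manePot at *
      linarith
    rw [abs_le]
    constructor <;> linarith
  · have hbz : ¬ BddBelow (pathSet A m x z) := by
      intro h
      exact hb (bdd_transfer A α C m hC hHol x z y hx hz hy h)
    unfold manePot
    rw [Real.sInf_of_not_bddBelow hb, Real.sInf_of_not_bddBelow hbz]
    simpa using hε
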